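/- A regular epi-reflective subcategory of a regular Mal'tsev category is again a regular Mal'tsev category. -/

import Mathlib

open CategoryTheory CategoryTheory.Limits

universe v u v' u'

variable {C : Type u} [Category.{v} C]

/-- An internal relation on an object `X`: a pair of jointly monic morphisms. -/
structure RelOn (X : C) where
  R : C
  r1 : R ⟶ X
  r2 : R ⟶ X
  jmono : ∀ {Z : C} (f g : Z ⟶ R), f ≫ r1 = g ≫ r1 → f ≫ r2 = g ≫ r2 → f = g

namespace RelOn

variable {X : C} (ρ : RelOn X)

def Reflexive : Prop :=
  ∃ δ : X ⟶ ρ.R, δ ≫ ρ.r1 = 𝟙 X ∧ δ ≫ ρ.r2 = 𝟙 X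

def Symmetric : Prop :=
  ∃ σ : ρ.R ⟶ ρ.R, σ ≫ ρ.r1 = ρ.r2 ∧ σ ≫ ρ.r2 = ρ.r1

/-- Transitivity, formulated with generalized elements. -/
def Transitive : Prop :=
  ∀ {Z : C} (a b : Z ⟶ ρ.R), a ≫ ρ.r2 = b ≫ ρ.r1 →
    ∃ t : Z ⟶ ρ.R, t ≫ ρ.r1 = a ≫ ρ.r1 ∧ t ≫ ρ.r2 = b ≫ ρ.r2

def IsEquivalence : Prop := ρ.Reflexive ∧ ρ.Symmetric ∧ ρ.Transitive

/-- The relation is effective: it is the kernel pair of some morphism. -/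
def Effective : Prop :=
  ∃ (Y : C) (f : X ⟶ Y) (h : ρ.r1 ≫ f = ρ.r2 ≫ f),
    Nonempty (IsLimit (PullbackCone.mk ρ.r1 ρ.r2 h))

end RelOn

/-- A Mal'tsev category: every internal reflexive relation is an equivalence relation. -/
class MaltsevCat (C : Type u) [Category.{v} C] : Prop where
  refl_is_equiv : ∀ {X : C} (ρ : RelOn X), ρ.Reflexive → ρ.Symmetric ∧ ρ.Transitive

/-- A regular category: finitely complete, coequalizers of kernel pairs,
pullback-stable regular epimorphisms. -/
class RegularCat (C : Type u) [Category.{v} C] : Prop where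
  hasFiniteLimits : HasFiniteLimits C
  hasCoeqOfKernelPair : ∀ {A B R : C} (f : A ⟶ B) (p1 p2 : R ⟶ A) (h : p1 ≫ f = p2 ≫ f),
    Nonempty (IsLimit (PullbackCone.mk p1 p2 h)) → HasCoequalizer p1 p2
  regEpiStable : ∀ {P A B Z : C} (f : A ⟶ B) (g : Z ⟶ B) (p1 : P ⟶ A) (p2 : P ⟶ Z)
    (h : p1 ≫ f = p2 ≫ g), Nonempty (IsLimit (PullbackCone.mk p1 p2 h)) →
    Nonempty (RegularEpi f) → Nonempty (RegularEpi p2)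

/-- A Barr-exact category: regular and every equivalence relation is effective. -/
class ExactCat (C : Type u) [Category.{v} C] extends RegularCat C : Prop where
  effective : ∀ {X : C} (ρ : RelOn X), ρ.IsEquivalence → ρ.Effective

/-- An internal reflexive graph. -/
structure ReflexiveGraph (C : Type u) [Category.{v} C] where
  C1 : C
  C0 : C
  d : C1 ⟶ C0
  c : C1 ⟶ C0
  e : C0 ⟶ C1
  ed : e ≫ d = 𝟙 C0
  ec : e ≫ c = 𝟙 C0

/-- An internal category structure on a reflexive graph, formulated via
generalized elements (equivalent to the usual pullback formulation in a
finitely complete category). `comp a b _` is the composite "`a` followed by `b`". -/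
structure CatStruct {C : Type u} [Category.{v} C] (G : ReflexiveGraph C) where
  comp : ∀ {Z : C} (a b : Z ⟶ G.C1), a ≫ G.c = b ≫ G.d → (Z ⟶ G.C1)
  comp_natural : ∀ {W Z : C} (w : W ⟶ Z) (a b : Z ⟶ G.C1) (h : a ≫ G.c = b ≫ G.d)
      (h' : (w ≫ a) ≫ G.c = (w ≫ b) ≫ G.d),
      w ≫ comp a b h = comp (w ≫ a) (w ≫ b) h'
  comp_d : ∀ {Z : C} (a b : Z ⟶ G.C1) (h : a ≫ G.c = b ≫ G.d), comp a b h ≫ G.d = a ≫ G.d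
  comp_c : ∀ {Z : C} (a b : Z ⟶ G.C1) (h : a ≫ G.c = b ≫ G.d), comp a b h ≫ G.c = b ≫ G.c
  comp_unit_l : ∀ {Z : C} (a : Z ⟶ G.C1) (h : (a ≫ G.d ≫ G.e) ≫ G.c = a ≫ G.d),
      comp (a ≫ G.d ≫ G.e) a h = a
  comp_unit_r : ∀ {Z : C} (a : Z ⟶ G.C1) (h : a ≫ G.c = (a ≫ G.c ≫ G.e) ≫ G.d),
      comp a (a ≫ G.c ≫ G.e) h = a
  comp_assoc : ∀ {Z : C} (a b c' : Z ⟶ G.C1) (h1 : a ≫ G.c = b ≫ G.d)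
      (h2 : b ≫ G.c = c' ≫ G.d)
      (h3 : comp a b h1 ≫ G.c = c' ≫ G.d)
      (h4 : a ≫ G.c = comp b c' h2 ≫ G.d),
      comp (comp a b h1) c' h3 = comp a (comp b c' h2) h4

/-- The internal category has inverses, i.e. is an internal groupoid. -/
def CatStruct.HasInverses {C : Type u} [Category.{v} C] {G : ReflexiveGraph C}
    (S : CatStruct G) : Prop :=
  ∃ i : G.C1 ⟶ G.C1, i ≫ G.d = G.c ∧ i ≫ G.c = G.d ∧
    (∀ {Z : C} (a : Z ⟶ G.C1) (h : a ≫ G.c = (a ≫ i) ≫ G.d),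
      S.comp a (a ≫ i) h = a ≫ G.d ≫ G.e) ∧
    (∀ {Z : C} (a : Z ⟶ G.C1) (h : (a ≫ i) ≫ G.c = a ≫ G.d),
      S.comp (a ≫ i) a h = a ≫ G.c ≫ G.e)

/-- An internal groupoid. -/
structure GroupoidObj (C : Type u) [Category.{v} C] where
  graph : ReflexiveGraph C
  str : CatStruct graph
  hasInv : str.HasInverses

/-- Internal functors between internal groupoids. -/
@[ext]
structure GrpdHom (A B : GroupoidObj C) where
  f0 : A.graph.C0 ⟶ B.graph.C0
  f1 : A.graph.C1 ⟶ B.graph.C1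
  hd : f1 ≫ B.graph.d = A.graph.d ≫ f0
  hc : f1 ≫ B.graph.c = A.graph.c ≫ f0
  he : A.graph.e ≫ f1 = f0 ≫ B.graph.e
  hm : ∀ {Z : C} (a b : Z ⟶ A.graph.C1) (h : a ≫ A.graph.c = b ≫ A.graph.d)
      (h' : (a ≫ f1) ≫ B.graph.c = (b ≫ f1) ≫ B.graph.d),
      A.str.comp a b h ≫ f1 = B.str.comp (a ≫ f1) (b ≫ f1) h'

lemma GrpdHom.cond {A B : GroupoidObj C} (f : GrpdHom A B) {Z : C} {a b : Z ⟶ A.graph.C1}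
    (h : a ≫ A.graph.c = b ≫ A.graph.d) :
    (a ≫ f.f1) ≫ B.graph.c = (b ≫ f.f1) ≫ B.graph.d := by
  rw [Category.assoc, f.hc, Category.assoc, f.hd, ← Category.assoc, h, Category.assoc]

def GrpdHom.id (A : GroupoidObj C) : GrpdHom A A where
  f0 := 𝟙 _
  f1 := 𝟙 _
  hd := by simp
  hc := by simp
  he := by simp
  hm := by intros; simp

def GrpdHom.comp {A B D : GroupoidObj C} (f : GrpdHom A B) (g : GrpdHom B D) : GrpdHom A D where
  f0 := f.f0 ≫ g.f0
  f1 := f.f1 ≫ g.f1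
  hd := by rw [Category.assoc, g.hd, ← Category.assoc, f.hd, Category.assoc]
  hc := by rw [Category.assoc, g.hc, ← Category.assoc, f.hc, Category.assoc]
  he := by rw [← Category.assoc, f.he, Category.assoc, g.he, ← Category.assoc]
  hm := by
    intro Z a b h h'
    rw [← Category.assoc, f.hm a b h (f.cond h), g.hm _ _ (f.cond h) (g.cond (f.cond h))]
    simp only [Category.assoc]

instance : Category (GroupoidObj C) where
  Hom := GrpdHom
  id := GrpdHom.id
  comp := GrpdHom.comp
  id_comp f := by apply GrpdHom.ext <;> simp [GrpdHom.comp, GrpdHom.id]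
  comp_id f := by apply GrpdHom.ext <;> simp [GrpdHom.comp, GrpdHom.id]
  assoc f g h := by apply GrpdHom.ext <;> simp [GrpdHom.comp]

/-- Coerce a morphism of internal groupoids to its underlying data. -/
def homToGrpdHom {A B : GroupoidObj C} (f : A ⟶ B) : GrpdHom A B := f

/-- Morphisms of reflexive graphs. -/
@[ext]
structure RGHom (A B : ReflexiveGraph C) where
  f0 : A.C0 ⟶ B.C0
  f1 : A.C1 ⟶ B.C1
  hd : f1 ≫ B.d = A.d ≫ f0
  hc : f1 ≫ B.c = A.c ≫ f0
  he : A.e ≫ f1 = f0 ≫ B.e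

instance : Category (ReflexiveGraph C) where
  Hom := RGHom
  id A := ⟨𝟙 _, 𝟙 _, by simp, by simp, by simp⟩
  comp f g := ⟨f.f0 ≫ g.f0, f.f1 ≫ g.f1,
    by rw [Category.assoc, g.hd, ← Category.assoc, f.hd, Category.assoc],
    by rw [Category.assoc, g.hc, ← Category.assoc, f.hc, Category.assoc],
    by rw [← Category.assoc, f.he, Category.assoc, g.he, ← Category.assoc]⟩
  id_comp f := by apply RGHom.ext <;> simp
  comp_id f := by apply RGHom.ext <;> simp
  assoc f g h := by apply RGHom.ext <;> simp

def homToRGHom {A B : ReflexiveGraph C} (f : A ⟶ B) : RGHom A B := f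

/-- The forgetful functor from internal groupoids to reflexive graphs. -/
def forgetToRG (C : Type u) [Category.{v} C] : GroupoidObj C ⥤ ReflexiveGraph C where
  obj A := A.graph
  map f := ⟨(homToGrpdHom f).f0, (homToGrpdHom f).f1, (homToGrpdHom f).hd,
    (homToGrpdHom f).hc, (homToGrpdHom f).he⟩
  map_id A := by apply RGHom.ext <;> rfl
  map_comp f g := by apply RGHom.ext <;> rfl

/-- A discrete internal groupoid: the unit is an isomorphism. -/
def GroupoidObj.IsDiscrete (A : GroupoidObj C) : Prop := IsIso A.graph.e

/-- An internal double groupoid (an internal groupoid in internal groupoids) is a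
2-groupoid when its groupoid of objects is discrete. -/
def Is2Grpd (D : GroupoidObj (GroupoidObj C)) : Prop := D.graph.C0.IsDiscrete

/-- Zero morphisms, defined without extra structure: morphisms factoring through a
zero object. -/
def IsZeroMor {A B : C} (f : A ⟶ B) : Prop :=
  ∃ (Z : C) (_ : IsZero Z) (g : A ⟶ Z) (h : Z ⟶ B), f = g ≫ h

/-- `κ` is a kernel of `α`. -/
def IsKernelOf {A B K : C} (κ : K ⟶ A) (α : A ⟶ B) : Prop :=
  IsZeroMor (κ ≫ α) ∧ ∀ {Z : C} (g : Z ⟶ A), IsZeroMor (g ≫ α) → ∃! l : Z ⟶ K, l ≫ κ = g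

/-- A split extension with kernel object `Xo`. -/
structure SplitExtOn (Xo : C) where
  A : C
  B : C
  κ : Xo ⟶ A
  α : A ⟶ B
  β : B ⟶ A
  split : β ≫ α = 𝟙 B
  ker : IsKernelOf κ α

/-- A generic split extension with kernel `Xo`: terminal among split extensions
with kernel `Xo` (morphisms being the identity on the kernel). -/
def IsGenericSplitExt {Xo : C} (E : SplitExtOn Xo) : Prop :=
  ∀ E' : SplitExtOn Xo, ∃! vw : (E'.A ⟶ E.A) × (E'.B ⟶ E.B),
    E'.κ ≫ vw.1 = E.κ ∧ vw.1 ≫ E.α = E'.α ≫ vw.2 ∧ E'.β ≫ vw.1 = vw.2 ≫ E.β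

/-- Action representability: every object admits a generic split extension. -/
def ActionRepresentable (C : Type u) [Category.{v} C] : Prop :=
  ∀ X : C, ∃ E : SplitExtOn X, IsGenericSplitExt E

/-- A protoadditive functor: preserves kernels of split epimorphisms. -/
def Protoadditive {X : Type u'} [Category.{v'} X] (H : X ⥤ C) : Prop :=
  ∀ {A B K : X} (α : A ⟶ B) (β : B ⟶ A), β ≫ α = 𝟙 B →
    ∀ (κ : K ⟶ A), IsKernelOf κ α → IsKernelOf (H.map κ) (H.map α)

/-- A semi-abelian category: pointed, Barr-exact, protomodular (split short five
lemma), with binary coproducts. -/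
class SemiAbelian (C : Type u) [Category.{v} C] extends ExactCat C : Prop where
  hasZeroObject : HasZeroObject C
  hasBinaryCoproducts : HasBinaryCoproducts C
  ssfl : ∀ {A B B' Co : C} (k : A ⟶ B) (p : B ⟶ Co) (s : Co ⟶ B)
      (k' : A ⟶ B') (p' : B' ⟶ Co) (s' : Co ⟶ B') (b : B ⟶ B'),
      s ≫ p = 𝟙 Co → s' ≫ p' = 𝟙 Co → IsKernelOf k p → IsKernelOf k' p' →
      k ≫ b = k' → b ≫ p' = p → s ≫ b = s' → IsIso b

/-- A natural Mal'tsev operation on a category with binary products. -/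
def IsNaturallyMaltsev (C : Type u) [Category.{v} C] [HasBinaryProducts C] : Prop :=
  ∃ p : ∀ A : C, (A ⨯ A) ⨯ A ⟶ A,
    (∀ {A B : C} (f : A ⟶ B), prod.map (prod.map f f) f ≫ p B = p A ≫ f) ∧
    (∀ A : C, prod.lift (prod.lift prod.fst prod.snd) prod.snd ≫ p A
        = (prod.fst : A ⨯ A ⟶ A)) ∧
    (∀ A : C, prod.lift (prod.lift prod.fst prod.fst) prod.snd ≫ p A
        = (prod.snd : A ⨯ A ⟶ A))

/-! ### Auxiliary lemmas for stmt5 -/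

section Stmt5Aux

lemma s5epi_of_isColimit_cofork {W A B : C} {u v : W ⟶ A} {f : A ⟶ B} {w : u ≫ f = v ≫ f}
    (h : IsColimit (Cofork.ofπ f w)) : Epi f :=
  ⟨fun g h' eq => Cofork.IsColimit.hom_ext h (by simpa using eq)⟩

/-- A regular epimorphism is the coequalizer of its kernel pair. -/
noncomputable def s5isColimitCoforkKernelPair {A B K : C} (f : A ⟶ B) (re : RegularEpi f)
    {k1 k2 : K ⟶ A} (hk : k1 ≫ f = k2 ≫ f)
    (hlim : IsLimit (PullbackCone.mk k1 k2 hk)) :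
    IsColimit (Cofork.ofπ f hk) := by
  haveI := re
  refine Cofork.IsColimit.mk' _ (fun s => ?_)
  have hs : re.left ≫ s.π = re.right ≫ s.π := by
    obtain ⟨l, hl1, hl2⟩ : ∃ l : re.W ⟶ K, l ≫ k1 = re.left ∧ l ≫ k2 = re.right :=
      ⟨_, PullbackCone.IsLimit.lift_fst hlim _ _ re.w, PullbackCone.IsLimit.lift_snd hlim _ _ re.w⟩
    rw [← hl1, ← hl2, Category.assoc, Category.assoc, s.condition]
  refine ⟨Cofork.IsColimit.desc re.isColimit s.π hs, ?_, ?_⟩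
  · simpa using Cofork.IsColimit.π_desc' re.isColimit s.π hs
  · intro m hm
    have : Epi f := RegularEpi.epi f re
    apply (cancel_epi f).1
    rw [show (Cofork.ofπ f hk).π = f from rfl] at hm
    rw [hm]
    simpa using (Cofork.IsColimit.π_desc' re.isColimit s.π hs).symm

/-- In a regular category, regular epimorphisms are closed under composition. -/
lemma s5regularEpi_comp [RegularCat C] {A B D : C} (f : A ⟶ B) (g : B ⟶ D)
    (hf : Nonempty (RegularEpi f)) (hg : Nonempty (RegularEpi g)) :
    Nonempty (RegularEpi (f ≫ g)) := by
  haveI : HasFiniteLimits C := RegularCat.hasFiniteLimits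
  obtain ⟨rf⟩ := hf
  obtain ⟨rg⟩ := hg
  haveI := RegularEpi.epi f rf; haveI := RegularEpi.epi g rg
  have colf : IsColimit (Cofork.ofπ f (pullback.condition (f := f) (g := f))) :=
    s5isColimitCoforkKernelPair f rf _ (pullbackIsPullback f f)
  have colg : IsColimit (Cofork.ofπ g (pullback.condition (f := g) (g := g))) :=
    s5isColimitCoforkKernelPair g rg _ (pullbackIsPullback g g)
  refine ⟨⟨pullback (f ≫ g) (f ≫ g), pullback.fst _ _, pullback.snd _ _, pullback.condition,
    Cofork.IsColimit.mk' _ (fun s => ?_)⟩⟩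
  have hπ : pullback.fst (f ≫ g) (f ≫ g) ≫ s.π = pullback.snd (f ≫ g) (f ≫ g) ≫ s.π :=
    s.condition
  -- the kernel pair of `f` is coequalized by `s.π`
  have hwff : pullback.fst f f ≫ (f ≫ g) = pullback.snd f f ≫ (f ≫ g) := by
    rw [← Category.assoc, pullback.condition, Category.assoc]
  have hq : pullback.fst f f ≫ s.π = pullback.snd f f ≫ s.π := by
    calc pullback.fst f f ≫ s.π
        = (pullback.lift (pullback.fst f f) (pullback.snd f f) hwff
            ≫ pullback.fst (f ≫ g) (f ≫ g)) ≫ s.π := by rw [pullback.lift_fst]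
      _ = (pullback.lift (pullback.fst f f) (pullback.snd f f) hwff
            ≫ pullback.snd (f ≫ g) (f ≫ g)) ≫ s.π := by
            rw [Category.assoc, hπ, ← Category.assoc]
      _ = pullback.snd f f ≫ s.π := by rw [pullback.lift_snd]
  have hfh : f ≫ Cofork.IsColimit.desc colf s.π hq = s.π := by
    simpa using Cofork.IsColimit.π_desc' colf s.π hq
  -- the kernel pair of `g` is coequalized by the induced map
  have hgh : pullback.fst g g ≫ Cofork.IsColimit.desc colf s.π hq
      = pullback.snd g g ≫ Cofork.IsColimit.desc colf s.π hq := by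
    obtain ⟨rs2⟩ := RegularCat.regEpiStable f (pullback.fst g g)
      (pullback.fst f (pullback.fst g g)) (pullback.snd f (pullback.fst g g))
      pullback.condition ⟨pullbackIsPullback _ _⟩ ⟨rf⟩
    haveI := RegularEpi.epi _ rs2
    obtain ⟨ru2⟩ := RegularCat.regEpiStable f
      (pullback.snd f (pullback.fst g g) ≫ pullback.snd g g)
      (pullback.fst f (pullback.snd f (pullback.fst g g) ≫ pullback.snd g g))
      (pullback.snd f (pullback.snd f (pullback.fst g g) ≫ pullback.snd g g))
      pullback.condition ⟨pullbackIsPullback _ _⟩ ⟨rf⟩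
    haveI := RegularEpi.epi _ ru2
    have c1 : pullback.fst f (pullback.fst g g) ≫ f
        = pullback.snd f (pullback.fst g g) ≫ pullback.fst g g := pullback.condition
    have c2 : pullback.fst g g ≫ g = pullback.snd g g ≫ g := pullback.condition
    have c3 : pullback.fst f (pullback.snd f (pullback.fst g g) ≫ pullback.snd g g) ≫ f
        = pullback.snd f (pullback.snd f (pullback.fst g g) ≫ pullback.snd g g)
            ≫ (pullback.snd f (pullback.fst g g) ≫ pullback.snd g g) := pullback.condition
    have hab : (pullback.snd f (pullback.snd f (pullback.fst g g) ≫ pullback.snd g g)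
          ≫ pullback.fst f (pullback.fst g g)) ≫ (f ≫ g)
        = pullback.fst f (pullback.snd f (pullback.fst g g) ≫ pullback.snd g g) ≫ (f ≫ g) := by
      calc (pullback.snd f (pullback.snd f (pullback.fst g g) ≫ pullback.snd g g)
              ≫ pullback.fst f (pullback.fst g g)) ≫ (f ≫ g)
          = pullback.snd f (pullback.snd f (pullback.fst g g) ≫ pullback.snd g g)
              ≫ (pullback.fst f (pullback.fst g g) ≫ f) ≫ g := by
              simp only [Category.assoc]
        _ = pullback.snd f (pullback.snd f (pullback.fst g g) ≫ pullback.snd g g)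
              ≫ (pullback.snd f (pullback.fst g g) ≫ pullback.fst g g) ≫ g := by rw [c1]
        _ = pullback.snd f (pullback.snd f (pullback.fst g g) ≫ pullback.snd g g)
              ≫ pullback.snd f (pullback.fst g g) ≫ pullback.fst g g ≫ g := by
              simp only [Category.assoc]
        _ = pullback.snd f (pullback.snd f (pullback.fst g g) ≫ pullback.snd g g)
              ≫ pullback.snd f (pullback.fst g g) ≫ pullback.snd g g ≫ g := by rw [c2]
        _ = (pullback.snd f (pullback.snd f (pullback.fst g g) ≫ pullback.snd g g)
              ≫ (pullback.snd f (pullback.fst g g) ≫ pullback.snd g g)) ≫ g := by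
              simp only [Category.assoc]
        _ = (pullback.fst f (pullback.snd f (pullback.fst g g) ≫ pullback.snd g g) ≫ f) ≫ g := by
              rw [← c3]
        _ = pullback.fst f (pullback.snd f (pullback.fst g g) ≫ pullback.snd g g) ≫ (f ≫ g) := by
              simp only [Category.assoc]
    have hab2 : (pullback.snd f (pullback.snd f (pullback.fst g g) ≫ pullback.snd g g)
          ≫ pullback.fst f (pullback.fst g g)) ≫ s.π
        = pullback.fst f (pullback.snd f (pullback.fst g g) ≫ pullback.snd g g) ≫ s.π := by
      calc (pullback.snd f (pullback.snd f (pullback.fst g g) ≫ pullback.snd g g)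
              ≫ pullback.fst f (pullback.fst g g)) ≫ s.π
          = (pullback.lift _ _ hab ≫ pullback.fst (f ≫ g) (f ≫ g)) ≫ s.π := by
            rw [pullback.lift_fst]
        _ = (pullback.lift _ _ hab ≫ pullback.snd (f ≫ g) (f ≫ g)) ≫ s.π := by
            rw [Category.assoc, hπ, ← Category.assoc]
        _ = pullback.fst f (pullback.snd f (pullback.fst g g) ≫ pullback.snd g g) ≫ s.π := by
            rw [pullback.lift_snd]
    rw [← cancel_epi (pullback.snd f (pullback.fst g g)),
      ← cancel_epi (pullback.snd f (pullback.snd f (pullback.fst g g) ≫ pullback.snd g g))]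
    calc pullback.snd f (pullback.snd f (pullback.fst g g) ≫ pullback.snd g g)
            ≫ pullback.snd f (pullback.fst g g)
            ≫ pullback.fst g g ≫ Cofork.IsColimit.desc colf s.π hq
        = pullback.snd f (pullback.snd f (pullback.fst g g) ≫ pullback.snd g g)
            ≫ (pullback.snd f (pullback.fst g g) ≫ pullback.fst g g)
            ≫ Cofork.IsColimit.desc colf s.π hq := by simp only [Category.assoc]
      _ = pullback.snd f (pullback.snd f (pullback.fst g g) ≫ pullback.snd g g)
            ≫ (pullback.fst f (pullback.fst g g) ≫ f) ≫ Cofork.IsColimit.desc colf s.π hq := by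
            rw [← c1]
      _ = (pullback.snd f (pullback.snd f (pullback.fst g g) ≫ pullback.snd g g)
            ≫ pullback.fst f (pullback.fst g g)) ≫ (f ≫ Cofork.IsColimit.desc colf s.π hq) := by
            simp only [Category.assoc]
      _ = (pullback.snd f (pullback.snd f (pullback.fst g g) ≫ pullback.snd g g)
            ≫ pullback.fst f (pullback.fst g g)) ≫ s.π := by rw [hfh]
      _ = pullback.fst f (pullback.snd f (pullback.fst g g) ≫ pullback.snd g g) ≫ s.π := hab2
      _ = pullback.fst f (pullback.snd f (pullback.fst g g) ≫ pullback.snd g g)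
            ≫ (f ≫ Cofork.IsColimit.desc colf s.π hq) := by rw [hfh]
      _ = (pullback.fst f (pullback.snd f (pullback.fst g g) ≫ pullback.snd g g) ≫ f)
            ≫ Cofork.IsColimit.desc colf s.π hq := by simp only [Category.assoc]
      _ = (pullback.snd f (pullback.snd f (pullback.fst g g) ≫ pullback.snd g g)
            ≫ (pullback.snd f (pullback.fst g g) ≫ pullback.snd g g))
            ≫ Cofork.IsColimit.desc colf s.π hq := by rw [c3]
      _ = pullback.snd f (pullback.snd f (pullback.fst g g) ≫ pullback.snd g g)
            ≫ pullback.snd f (pullback.fst g g)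
            ≫ pullback.snd g g ≫ Cofork.IsColimit.desc colf s.π hq := by
            simp only [Category.assoc]
  refine ⟨Cofork.IsColimit.desc colg (Cofork.IsColimit.desc colf s.π hq) hgh, ?_, ?_⟩
  · have h1 : g ≫ Cofork.IsColimit.desc colg (Cofork.IsColimit.desc colf s.π hq) hgh
        = Cofork.IsColimit.desc colf s.π hq := by
      simpa using Cofork.IsColimit.π_desc' colg (Cofork.IsColimit.desc colf s.π hq) hgh
    show (f ≫ g) ≫ _ = s.π
    rw [Category.assoc, h1, hfh]
  · intro m hm
    haveI : Epi (f ≫ g) := epi_comp f g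
    apply (cancel_epi (f ≫ g)).1
    have hm' : (f ≫ g) ≫ m = s.π := hm
    rw [hm']
    have h1 : g ≫ Cofork.IsColimit.desc colg (Cofork.IsColimit.desc colf s.π hq) hgh
        = Cofork.IsColimit.desc colf s.π hq := by
      simpa using Cofork.IsColimit.π_desc' colg (Cofork.IsColimit.desc colf s.π hq) hgh
    rw [Category.assoc, h1, hfh]

end Stmt5Aux

section Stmt5Refl

variable (P : C → Prop) [Reflective (ObjectProperty.ι P)]

/-- The unit of the reflection. -/
noncomputable def s5unit (Z : C) :
    Z ⟶ (ObjectProperty.ι P).obj ((reflector (ObjectProperty.ι P)).obj Z) :=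
  (reflectorAdjunction (ObjectProperty.ι P)).unit.app Z

/-- Transpose of a morphism into the subcategory across the adjunction. -/
noncomputable def s5transp {Z : C} {W : ObjectProperty.FullSubcategory P}
    (z : Z ⟶ (ObjectProperty.ι P).obj W) :
    (reflector (ObjectProperty.ι P)).obj Z ⟶ W :=
  ((reflectorAdjunction (ObjectProperty.ι P)).homEquiv Z W).symm z

lemma s5unit_transp {Z : C} {W : ObjectProperty.FullSubcategory P}
    (z : Z ⟶ (ObjectProperty.ι P).obj W) :
    s5unit P Z ≫ (ObjectProperty.ι P).map (s5transp P z) = z := by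
  simp only [s5unit, s5transp]
  rw [← Adjunction.homEquiv_unit, Equiv.apply_symm_apply]

lemma s5unit_epi
    (hunit : ∀ X : C,
      Nonempty (RegularEpi ((reflectorAdjunction (ObjectProperty.ι P)).unit.app X)))
    (Z : C) : Epi (s5unit P Z) := by
  obtain ⟨re⟩ := hunit Z
  show Epi ((reflectorAdjunction (ObjectProperty.ι P)).unit.app Z)
  exact RegularEpi.epi _ re

/-- An object admitting a jointly monic pair of morphisms into the subcategory lies in the
subcategory. -/
lemma s5P_of_jmono (hrep : ∀ {A B : C}, P A → (A ≅ B) → P B)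
    (hunit : ∀ X : C,
      Nonempty (RegularEpi ((reflectorAdjunction (ObjectProperty.ι P)).unit.app X)))
    {K : C} {M N : ObjectProperty.FullSubcategory P}
    (m1 : K ⟶ (ObjectProperty.ι P).obj M) (m2 : K ⟶ (ObjectProperty.ι P).obj N)
    (hj : ∀ {Z : C} (a b : Z ⟶ K), a ≫ m1 = b ≫ m1 → a ≫ m2 = b ≫ m2 → a = b) :
    P K := by
  haveI hm : Mono (s5unit P K) := by
    constructor
    intro Z a b hab
    refine hj a b ?_ ?_
    · rw [← s5unit_transp P m1]
      simp only [← Category.assoc]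
      rw [hab]
    · rw [← s5unit_transp P m2]
      simp only [← Category.assoc]
      rw [hab]
  obtain ⟨re⟩ := hunit K
  haveI : RegularEpi (s5unit P K) := re
  haveI : IsIso (s5unit P K) := isIso_of_regularEpi_of_mono _ re
  exact hrep ((reflector (ObjectProperty.ι P)).obj K).property (asIso (s5unit P K)).symm

/-- A limit pullback cone in the subcategory is a limit pullback cone in the ambient
category. -/
noncomputable def s5pbToC
    (hunit : ∀ X : C,
      Nonempty (RegularEpi ((reflectorAdjunction (ObjectProperty.ι P)).unit.app X)))
    {A B Z R : ObjectProperty.FullSubcategory P}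
    {f : A ⟶ B} {g : Z ⟶ B} {p1 : R ⟶ A} {p2 : R ⟶ Z}
    (h : p1 ≫ f = p2 ≫ g)
    (h' : (ObjectProperty.ι P).map p1 ≫ (ObjectProperty.ι P).map f
        = (ObjectProperty.ι P).map p2 ≫ (ObjectProperty.ι P).map g)
    (hl : IsLimit (PullbackCone.mk p1 p2 h)) :
    IsLimit (PullbackCone.mk ((ObjectProperty.ι P).map p1)
      ((ObjectProperty.ι P).map p2) h') := by
  haveI : ∀ W : C, Epi (s5unit P W) := s5unit_epi P hunit
  have cond : ∀ s : PullbackCone ((ObjectProperty.ι P).map f)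
      ((ObjectProperty.ι P).map g),
      s5transp P s.fst ≫ f = s5transp P s.snd ≫ g := by
    intro s
    apply (ObjectProperty.ι P).map_injective
    rw [← cancel_epi (s5unit P s.pt)]
    rw [Functor.map_comp, Functor.map_comp, ← Category.assoc, ← Category.assoc,
      s5unit_transp, s5unit_transp]
    exact s.condition
  refine PullbackCone.IsLimit.mk h'
    (fun s => s5unit P s.pt ≫ (ObjectProperty.ι P).map
      (PullbackCone.IsLimit.lift hl (s5transp P s.fst) (s5transp P s.snd) (cond s)))
    (fun s => ?_) (fun s => ?_) (fun s m hm1 hm2 => ?_)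
  · have hlf := PullbackCone.IsLimit.lift_fst hl (s5transp P s.fst) (s5transp P s.snd) (cond s)
    simp only [PullbackCone.mk_fst] at hlf
    erw [Category.assoc, ← Functor.map_comp, hlf, s5unit_transp]
  · have hls := PullbackCone.IsLimit.lift_snd hl (s5transp P s.fst) (s5transp P s.snd) (cond s)
    simp only [PullbackCone.mk_snd] at hls
    erw [Category.assoc, ← Functor.map_comp, hls, s5unit_transp]
  · have key : s5transp P m
        = PullbackCone.IsLimit.lift hl (s5transp P s.fst) (s5transp P s.snd) (cond s) := by
      apply PullbackCone.IsLimit.hom_ext hl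
      · simp only [PullbackCone.mk_fst]
        have e : s5transp P m ≫ p1 = s5transp P s.fst := by
          apply (ObjectProperty.ι P).map_injective
          rw [← cancel_epi (s5unit P s.pt), Functor.map_comp, ← Category.assoc,
            s5unit_transp P m, hm1, s5unit_transp P s.fst]
        have hlf := PullbackCone.IsLimit.lift_fst hl (s5transp P s.fst) (s5transp P s.snd) (cond s)
        simp only [PullbackCone.mk_fst] at hlf
        exact e.trans hlf.symm
      · simp only [PullbackCone.mk_snd]
        have e : s5transp P m ≫ p2 = s5transp P s.snd := by
          apply (ObjectProperty.ι P).map_injective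
          rw [← cancel_epi (s5unit P s.pt), Functor.map_comp, ← Category.assoc,
            s5unit_transp P m, hm2, s5unit_transp P s.snd]
        have hls := PullbackCone.IsLimit.lift_snd hl (s5transp P s.fst) (s5transp P s.snd) (cond s)
        simp only [PullbackCone.mk_snd] at hls
        exact e.trans hls.symm
    rw [← s5unit_transp P m, key]

/-- A limit pullback cone in the ambient category with vertices in the subcategory is a limit
pullback cone in the subcategory. -/
noncomputable def s5pbToX {A B Z R : ObjectProperty.FullSubcategory P}
    {f : A ⟶ B} {g : Z ⟶ B} {p1 : R ⟶ A} {p2 : R ⟶ Z}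
    (h' : (ObjectProperty.ι P).map p1 ≫ (ObjectProperty.ι P).map f
        = (ObjectProperty.ι P).map p2 ≫ (ObjectProperty.ι P).map g)
    (hl : IsLimit (PullbackCone.mk ((ObjectProperty.ι P).map p1)
      ((ObjectProperty.ι P).map p2) h'))
    (h : p1 ≫ f = p2 ≫ g) :
    IsLimit (PullbackCone.mk p1 p2 h) := by
  have cond : ∀ s : PullbackCone f g,
      (ObjectProperty.ι P).map s.fst ≫ (ObjectProperty.ι P).map f
        = (ObjectProperty.ι P).map s.snd ≫ (ObjectProperty.ι P).map g := by
    intro s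
    rw [← Functor.map_comp, ← Functor.map_comp, s.condition]
  refine PullbackCone.IsLimit.mk h
    (fun s => ObjectProperty.homMk (PullbackCone.IsLimit.lift hl ((ObjectProperty.ι P).map s.fst)
      ((ObjectProperty.ι P).map s.snd) (cond s)))
    (fun s => ?_) (fun s => ?_) (fun s m hm1 hm2 => ?_)
  · exact ObjectProperty.hom_ext _ (PullbackCone.IsLimit.lift_fst hl ((ObjectProperty.ι P).map s.fst)
      ((ObjectProperty.ι P).map s.snd) (cond s))
  · exact ObjectProperty.hom_ext _ (PullbackCone.IsLimit.lift_snd hl ((ObjectProperty.ι P).map s.fst)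
      ((ObjectProperty.ι P).map s.snd) (cond s))
  · exact ObjectProperty.hom_ext _ (PullbackCone.IsLimit.hom_ext hl
      ((congrArg InducedCategory.Hom.hom hm1).trans (PullbackCone.IsLimit.lift_fst hl ((ObjectProperty.ι P).map s.fst)
        ((ObjectProperty.ι P).map s.snd) (cond s)).symm)
      ((congrArg InducedCategory.Hom.hom hm2).trans (PullbackCone.IsLimit.lift_snd hl ((ObjectProperty.ι P).map s.fst)
        ((ObjectProperty.ι P).map s.snd) (cond s)).symm))

end Stmt5Refl

section Stmt5RegEpi

variable (P : C → Prop) [Reflective (ObjectProperty.ι P)]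

/-- A regular epimorphism of the ambient category between objects of the subcategory is a
regular epimorphism in the subcategory. -/
noncomputable def s5regEpiToX
    (hunit : ∀ X : C,
      Nonempty (RegularEpi ((reflectorAdjunction (ObjectProperty.ι P)).unit.app X)))
    {A B : ObjectProperty.FullSubcategory P} (f : A ⟶ B)
    (hf : RegularEpi ((ObjectProperty.ι P).map f)) : RegularEpi f := by
  haveI : ∀ W : C, Epi (s5unit P W) := s5unit_epi P hunit
  have hcond : s5transp P hf.left ≫ f = s5transp P hf.right ≫ f := by
    apply (ObjectProperty.ι P).map_injective
    rw [← cancel_epi (s5unit P hf.W)]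
    rw [Functor.map_comp, Functor.map_comp, ← Category.assoc, ← Category.assoc,
      s5unit_transp, s5unit_transp]
    exact hf.w
  refine ⟨(reflector (ObjectProperty.ι P)).obj hf.W, s5transp P hf.left,
    s5transp P hf.right, hcond, Cofork.IsColimit.mk' _ (fun s => ?_)⟩
  have hs' : hf.left ≫ (ObjectProperty.ι P).map s.π
      = hf.right ≫ (ObjectProperty.ι P).map s.π := by
    calc hf.left ≫ (ObjectProperty.ι P).map s.π
        = s5unit P hf.W ≫ (ObjectProperty.ι P).map (s5transp P hf.left ≫ s.π) := by
          rw [Functor.map_comp, ← Category.assoc, s5unit_transp]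
      _ = s5unit P hf.W ≫ (ObjectProperty.ι P).map (s5transp P hf.right ≫ s.π) := by
          rw [s.condition]
      _ = hf.right ≫ (ObjectProperty.ι P).map s.π := by
          rw [Functor.map_comp, ← Category.assoc, s5unit_transp]
  have hfac : (ObjectProperty.ι P).map f
      ≫ Cofork.IsColimit.desc hf.isColimit ((ObjectProperty.ι P).map s.π) hs'
      = (ObjectProperty.ι P).map s.π := by
    simpa using Cofork.IsColimit.π_desc' hf.isColimit ((ObjectProperty.ι P).map s.π) hs'
  refine ⟨ObjectProperty.homMk (Cofork.IsColimit.desc hf.isColimit ((ObjectProperty.ι P).map s.π) hs'),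
    ObjectProperty.hom_ext _ hfac, ?_⟩
  intro m hm
  haveI := RegularEpi.epi _ hf
  have h2 : (ObjectProperty.ι P).map f ≫ (ObjectProperty.ι P).map m
      = (ObjectProperty.ι P).map f
        ≫ Cofork.IsColimit.desc hf.isColimit ((ObjectProperty.ι P).map s.π) hs' := by
    have hm' : (ObjectProperty.ι P).map f ≫ (ObjectProperty.ι P).map m
        = (ObjectProperty.ι P).map s.π := congrArg InducedCategory.Hom.hom hm
    rw [hm', hfac]
  exact ObjectProperty.hom_ext _ ((cancel_epi ((ObjectProperty.ι P).map f)).1 h2)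

/-- A regular epimorphism in the subcategory is a regular epimorphism in the ambient
category. -/
lemma s5regEpiToC [RegularCat C]
    (hrep : ∀ {A B : C}, P A → (A ≅ B) → P B)
    (hunit : ∀ X : C,
      Nonempty (RegularEpi ((reflectorAdjunction (ObjectProperty.ι P)).unit.app X)))
    {A B : ObjectProperty.FullSubcategory P} (f : A ⟶ B) (hf : RegularEpi f) :
    Nonempty (RegularEpi ((ObjectProperty.ι P).map f)) := by
  haveI : HasFiniteLimits C := RegularCat.hasFiniteLimits
  haveI : ∀ W : C, Epi (s5unit P W) := s5unit_epi P hunit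
  -- the kernel pair of `f` in `C`
  let fc : (ObjectProperty.ι P).obj A ⟶ (ObjectProperty.ι P).obj B :=
    (ObjectProperty.ι P).map f
  have hK : P (pullback fc fc) := s5P_of_jmono P hrep hunit
    (pullback.fst fc fc) (pullback.snd fc fc)
    (fun a b h1 h2 => pullback.hom_ext h1 h2)
  let K' : ObjectProperty.FullSubcategory P := ⟨pullback fc fc, hK⟩
  let k1 : K' ⟶ A := ObjectProperty.homMk (pullback.fst fc fc)
  let k2 : K' ⟶ A := ObjectProperty.homMk (pullback.snd fc fc)
  have hcX : k1 ≫ f = k2 ≫ f := ObjectProperty.hom_ext _ pullback.condition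
  have hlX : IsLimit (PullbackCone.mk k1 k2 hcX) :=
    s5pbToX P (f := f) (g := f) (p1 := k1) (p2 := k2) pullback.condition
      (pullbackIsPullback fc fc) hcX
  -- `f` is the coequalizer of its kernel pair in the subcategory
  have colX : IsColimit (Cofork.ofπ f hcX) := s5isColimitCoforkKernelPair f hf hcX hlX
  haveI hfepiX : Epi f := s5epi_of_isColimit_cofork colX
  -- the coequalizer of the kernel pair in `C`
  haveI hcoeq : HasCoequalizer (pullback.fst fc fc) (pullback.snd fc fc) :=
    RegularCat.hasCoeqOfKernelPair fc _ _ pullback.condition ⟨pullbackIsPullback fc fc⟩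
  -- the coequalizer of the kernel pair in `C`, composed with the unit
  let Q : C := coequalizer (pullback.fst fc fc) (pullback.snd fc fc)
  let TQ : ObjectProperty.FullSubcategory P := (reflector (ObjectProperty.ι P)).obj Q
  have hqe : pullback.fst fc fc
        ≫ (coequalizer.π (pullback.fst fc fc) (pullback.snd fc fc) ≫ s5unit P Q)
      = pullback.snd fc fc
        ≫ (coequalizer.π (pullback.fst fc fc) (pullback.snd fc fc) ≫ s5unit P Q) := by
    rw [← Category.assoc, ← Category.assoc, coequalizer.condition]
  let qeta : A ⟶ TQ := ObjectProperty.homMk (coequalizer.π (pullback.fst fc fc) (pullback.snd fc fc) ≫ s5unit P Q :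
    (ObjectProperty.ι P).obj A ⟶ (ObjectProperty.ι P).obj TQ)
  have hqeX : k1 ≫ qeta = k2 ≫ qeta := ObjectProperty.hom_ext _ hqe
  let n : B ⟶ TQ := Cofork.IsColimit.desc colX qeta hqeX
  have hfn : f ≫ n = qeta := by simpa using Cofork.IsColimit.π_desc' colX qeta hqeX
  have hw : pullback.fst fc fc ≫ fc = pullback.snd fc fc ≫ fc := pullback.condition
  have hqm : coequalizer.π (pullback.fst fc fc) (pullback.snd fc fc)
      ≫ coequalizer.desc fc hw = fc := coequalizer.π_desc _ _
  let m' : TQ ⟶ B := s5transp P (coequalizer.desc fc hw)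
  have hem' : s5unit P Q ≫ (ObjectProperty.ι P).map m' = coequalizer.desc fc hw :=
    s5unit_transp P (coequalizer.desc fc hw)
  -- `n` and `m'` are mutually inverse
  have hnm' : n ≫ m' = 𝟙 B := by
    rw [← cancel_epi f, ← Category.assoc, hfn, Category.comp_id]
    exact ObjectProperty.hom_ext _ (show (coequalizer.π (pullback.fst fc fc) (pullback.snd fc fc) ≫ s5unit P Q)
        ≫ (ObjectProperty.ι P).map m' = fc by
      rw [Category.assoc, hem', hqm])
  have hm'n : (ObjectProperty.ι P).map m' ≫ (ObjectProperty.ι P).map n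
      = 𝟙 ((ObjectProperty.ι P).obj TQ) := by
    rw [← cancel_epi (coequalizer.π (pullback.fst fc fc) (pullback.snd fc fc) ≫ s5unit P Q),
      Category.comp_id]
    calc (coequalizer.π (pullback.fst fc fc) (pullback.snd fc fc) ≫ s5unit P Q)
          ≫ ((ObjectProperty.ι P).map m' ≫ (ObjectProperty.ι P).map n)
        = coequalizer.π (pullback.fst fc fc) (pullback.snd fc fc)
          ≫ (s5unit P Q ≫ (ObjectProperty.ι P).map m')
          ≫ (ObjectProperty.ι P).map n := by simp only [Category.assoc]
      _ = coequalizer.π (pullback.fst fc fc) (pullback.snd fc fc)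
          ≫ coequalizer.desc fc hw ≫ (ObjectProperty.ι P).map n := by rw [hem']
      _ = (coequalizer.π (pullback.fst fc fc) (pullback.snd fc fc)
          ≫ coequalizer.desc fc hw) ≫ (ObjectProperty.ι P).map n := by
          simp only [Category.assoc]
      _ = fc ≫ (ObjectProperty.ι P).map n := by rw [hqm]
      _ = coequalizer.π (pullback.fst fc fc) (pullback.snd fc fc) ≫ s5unit P Q :=
          (congrArg InducedCategory.Hom.hom (show f ≫ n = qeta from hfn))
  have hiso : IsIso ((ObjectProperty.ι P).map m') :=
    ⟨(ObjectProperty.ι P).map n, hm'n,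
      (show (ObjectProperty.ι P).map n ≫ (ObjectProperty.ι P).map m'
        = 𝟙 ((ObjectProperty.ι P).obj B) from congrArg InducedCategory.Hom.hom hnm')⟩
  have hsplit : Nonempty (RegularEpi ((ObjectProperty.ι P).map m')) := by
    haveI := hiso
    exact ⟨RegularEpi.ofIso (asIso ((ObjectProperty.ι P).map m'))⟩
  have hqre : Nonempty (RegularEpi (coequalizer.π (pullback.fst fc fc) (pullback.snd fc fc)
      ≫ s5unit P Q)) :=
    s5regularEpi_comp _ _ ⟨coequalizerRegular _ _⟩ (hunit Q)
  have final := s5regularEpi_comp _ _ hqre hsplit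
  have heq : (coequalizer.π (pullback.fst fc fc) (pullback.snd fc fc) ≫ s5unit P Q)
      ≫ (ObjectProperty.ι P).map m' = fc := by
    rw [Category.assoc, hem', hqm]
  have hfc : Nonempty (RegularEpi fc) := heq ▸ final
  exact hfc

end Stmt5RegEpi

/-- A regular epi-reflective subcategory of a regular Mal'tsev category
is again a regular Mal'tsev category. -/
theorem stmt5 {C : Type u} [Category.{v} C] [RegularCat C] [MaltsevCat C]
    (P : C → Prop) [Reflective (ObjectProperty.ι P)]
    (hrep : ∀ {A B : C}, P A → (A ≅ B) → P B)
    (hunit : ∀ X : C,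
      Nonempty (RegularEpi ((reflectorAdjunction (ObjectProperty.ι P)).unit.app X))) :
    RegularCat (ObjectProperty.FullSubcategory P) ∧ MaltsevCat (ObjectProperty.FullSubcategory P) := by
  haveI : HasFiniteLimits C := RegularCat.hasFiniteLimits
  haveI : ∀ W : C, Epi (s5unit P W) := s5unit_epi P hunit
  have hreg : RegularCat (ObjectProperty.FullSubcategory P) := by
    refine ⟨⟨fun J _ _ => hasLimitsOfShape_of_reflective (ObjectProperty.ι P)⟩, ?_, ?_⟩
    · -- coequalizers of kernel pairs
      intro A' B' R' f p1 p2 h hlim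
      obtain ⟨hl⟩ := hlim
      have h' : (ObjectProperty.ι P).map p1 ≫ (ObjectProperty.ι P).map f
          = (ObjectProperty.ι P).map p2 ≫ (ObjectProperty.ι P).map f := by
        rw [← Functor.map_comp, ← Functor.map_comp, h]
      have hlC := s5pbToC P hunit h h' hl
      haveI : HasCoequalizer ((ObjectProperty.ι P).map p1)
          ((ObjectProperty.ι P).map p2) :=
        RegularCat.hasCoeqOfKernelPair ((ObjectProperty.ι P).map f) _ _ h' ⟨hlC⟩
      let Q : C := coequalizer ((ObjectProperty.ι P).map p1)
        ((ObjectProperty.ι P).map p2)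
      let TQ : ObjectProperty.FullSubcategory P := (reflector (ObjectProperty.ι P)).obj Q
      let piX : A' ⟶ TQ := ObjectProperty.homMk (coequalizer.π ((ObjectProperty.ι P).map p1)
          ((ObjectProperty.ι P).map p2) ≫ s5unit P Q :
        (ObjectProperty.ι P).obj A' ⟶ (ObjectProperty.ι P).obj TQ)
      have hwC : (ObjectProperty.ι P).map p1
          ≫ (coequalizer.π ((ObjectProperty.ι P).map p1)
              ((ObjectProperty.ι P).map p2) ≫ s5unit P Q)
          = (ObjectProperty.ι P).map p2
          ≫ (coequalizer.π ((ObjectProperty.ι P).map p1)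
              ((ObjectProperty.ι P).map p2) ≫ s5unit P Q) := by
        rw [← Category.assoc, ← Category.assoc, coequalizer.condition]
      have hw : p1 ≫ piX = p2 ≫ piX := ObjectProperty.hom_ext _ hwC
      refine HasColimit.mk ⟨Cofork.ofπ piX hw, Cofork.IsColimit.mk' _ (fun s => ?_)⟩
      have hcs : (ObjectProperty.ι P).map p1 ≫ (ObjectProperty.ι P).map s.π
          = (ObjectProperty.ι P).map p2 ≫ (ObjectProperty.ι P).map s.π :=
        congrArg InducedCategory.Hom.hom s.condition
      let e' : TQ ⟶ s.pt :=
        s5transp P (coequalizer.desc ((ObjectProperty.ι P).map s.π) hcs)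
      have hfacC : (coequalizer.π ((ObjectProperty.ι P).map p1)
            ((ObjectProperty.ι P).map p2) ≫ s5unit P Q)
          ≫ (ObjectProperty.ι P).map e' = (ObjectProperty.ι P).map s.π := by
        rw [Category.assoc, s5unit_transp, coequalizer.π_desc]
      have hfac : piX ≫ e' = s.π := ObjectProperty.hom_ext _ hfacC
      refine ⟨e', hfac, ?_⟩
      intro m hm
      haveI : Epi (coequalizer.π ((ObjectProperty.ι P).map p1)
          ((ObjectProperty.ι P).map p2) ≫ s5unit P Q) := epi_comp _ _
      have h2 : (coequalizer.π ((ObjectProperty.ι P).map p1)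
            ((ObjectProperty.ι P).map p2) ≫ s5unit P Q)
            ≫ (ObjectProperty.ι P).map m
          = (coequalizer.π ((ObjectProperty.ι P).map p1)
            ((ObjectProperty.ι P).map p2) ≫ s5unit P Q)
            ≫ (ObjectProperty.ι P).map e' := by
        have hm' : (coequalizer.π ((ObjectProperty.ι P).map p1)
              ((ObjectProperty.ι P).map p2) ≫ s5unit P Q)
            ≫ (ObjectProperty.ι P).map m
            = (ObjectProperty.ι P).map s.π := congrArg InducedCategory.Hom.hom hm
        rw [hm', hfacC]
      exact ObjectProperty.hom_ext _ ((cancel_epi (coequalizer.π ((ObjectProperty.ι P).map p1)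
        ((ObjectProperty.ι P).map p2) ≫ s5unit P Q)).1 h2)
    · -- stability of regular epimorphisms
      intro Pb A' B' Z' f g p1 p2 h hlim hf
      obtain ⟨hl⟩ := hlim
      obtain ⟨rf⟩ := hf
      have h' : (ObjectProperty.ι P).map p1 ≫ (ObjectProperty.ι P).map f
          = (ObjectProperty.ι P).map p2 ≫ (ObjectProperty.ι P).map g := by
        rw [← Functor.map_comp, ← Functor.map_comp, h]
      have hlC := s5pbToC P hunit h h' hl
      obtain ⟨rp2⟩ := RegularCat.regEpiStable ((ObjectProperty.ι P).map f)
        ((ObjectProperty.ι P).map g) ((ObjectProperty.ι P).map p1)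
        ((ObjectProperty.ι P).map p2) h' ⟨hlC⟩ (s5regEpiToC P hrep hunit f rf)
      exact ⟨s5regEpiToX P hunit p2 rp2⟩
  refine ⟨hreg, ⟨?_⟩⟩
  intro X0 ρ hρ
  have jm : ∀ {Z : C} (a b : Z ⟶ (ObjectProperty.ι P).obj ρ.R),
      a ≫ (ObjectProperty.ι P).map ρ.r1 = b ≫ (ObjectProperty.ι P).map ρ.r1 →
      a ≫ (ObjectProperty.ι P).map ρ.r2 = b ≫ (ObjectProperty.ι P).map ρ.r2 →
      a = b := by
    intro Z a b h1 h2
    have e1 : s5transp P a ≫ ρ.r1 = s5transp P b ≫ ρ.r1 := by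
      apply (ObjectProperty.ι P).map_injective
      rw [← cancel_epi (s5unit P Z), Functor.map_comp, Functor.map_comp, ← Category.assoc,
        ← Category.assoc, s5unit_transp, s5unit_transp]
      exact h1
    have e2 : s5transp P a ≫ ρ.r2 = s5transp P b ≫ ρ.r2 := by
      apply (ObjectProperty.ι P).map_injective
      rw [← cancel_epi (s5unit P Z), Functor.map_comp, Functor.map_comp, ← Category.assoc,
        ← Category.assoc, s5unit_transp, s5unit_transp]
      exact h2
    have e3 := ρ.jmono (s5transp P a) (s5transp P b) e1 e2
    rw [← s5unit_transp P a, ← s5unit_transp P b, e3]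
  let ρC : RelOn ((ObjectProperty.ι P).obj X0) :=
    ⟨(ObjectProperty.ι P).obj ρ.R, (ObjectProperty.ι P).map ρ.r1,
      (ObjectProperty.ι P).map ρ.r2, jm⟩
  obtain ⟨δ, hδ1, hδ2⟩ := hρ
  have hρC : ρC.Reflexive := by
    refine ⟨(ObjectProperty.ι P).map δ, ?_, ?_⟩
    · show (ObjectProperty.ι P).map δ ≫ (ObjectProperty.ι P).map ρ.r1 = 𝟙 _
      rw [← Functor.map_comp]
      exact (show (ObjectProperty.ι P).map (δ ≫ ρ.r1)
        = (ObjectProperty.ι P).map (𝟙 X0) by rw [hδ1]).trans ((ObjectProperty.ι P).map_id X0)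
    · show (ObjectProperty.ι P).map δ ≫ (ObjectProperty.ι P).map ρ.r2 = 𝟙 _
      rw [← Functor.map_comp]
      exact (show (ObjectProperty.ι P).map (δ ≫ ρ.r2)
        = (ObjectProperty.ι P).map (𝟙 X0) by rw [hδ2]).trans ((ObjectProperty.ι P).map_id X0)
  obtain ⟨hsym, htrans⟩ := MaltsevCat.refl_is_equiv ρC hρC
  constructor
  · obtain ⟨σ, hσ1, hσ2⟩ := hsym
    exact ⟨ObjectProperty.homMk σ, ObjectProperty.hom_ext _ hσ1, ObjectProperty.hom_ext _ hσ2⟩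
  · intro Zx a b hab
    obtain ⟨t, ht1, ht2⟩ := htrans ((ObjectProperty.ι P).map a)
      ((ObjectProperty.ι P).map b) (congrArg InducedCategory.Hom.hom hab)
    exact ⟨ObjectProperty.homMk t, ObjectProperty.hom_ext _ ht1, ObjectProperty.hom_ext _ ht2⟩
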